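/- Existence of an equivariant deterministic greedy-optimal policy: let A be a finite nonempty type and H any type, each with an action of a group G, and let Q : H × A → ℝ satisfy Q(g•h, g•a) = Q(h, a) for all g ∈ G, h ∈ H, a ∈ A. If the action of G on H is free (i.e., g•h = h implies g = 1), then there exists a policy π : H → A such that π(g•h) = g•π(h) for all g ∈ G and h ∈ H, and Q(h, π(h)) = max_{a∈A} Q(h, a) for all h ∈ H. -/
import Mathlib


/-- Existence of an equivariant deterministic greedy-optimal policy: if `Q` is
group-invariant and the action of `G` on `H` is free, then there is a policy
`π : H → A` that is equivariant and greedy-optimal for `Q`. -/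
theorem exists_equivariant_greedy_policy {G H A : Type} [Group G] [MulAction G H]
    [MulAction G A] [Fintype A] [Nonempty A] (Q : H × A → ℝ)
    (hInv : ∀ (g : G) (h : H) (a : A), Q (g • h, g • a) = Q (h, a))
    (hFree : ∀ (g : G) (h : H), g • h = h → g = 1) :
    ∃ π : H → A,
      (∀ (g : G) (h : H), π (g • h) = g • π h) ∧
        ∀ h : H, Q (h, π h) = Finset.univ.sup' Finset.univ_nonempty fun a : A => Q (h, a) := by
  classical
  -- orbit representative
  set r : H → H := fun h => (Quotient.mk (MulAction.orbitRel G H) h).out with hr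
  have hrel : ∀ h : H, ∃ g : G, g • r h = h := by
    intro h
    have : r h ∈ MulAction.orbit G h := Quotient.mk_out (s := MulAction.orbitRel G H) h
    obtain ⟨g, hg⟩ := this
    exact ⟨g⁻¹, by rw [← hg]; simp⟩
  -- uniqueness of the group element
  have huniq : ∀ (g₁ g₂ : G) (x : H), g₁ • x = g₂ • x → g₁ = g₂ := by
    intro g₁ g₂ x hx
    have : (g₂⁻¹ * g₁) • x = x := by rw [mul_smul, hx]; simp
    exact (inv_mul_eq_one.mp (hFree _ _ this)).symm
  have hrinv : ∀ (g : G) (h : H), r (g • h) = r h := by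
    intro g h
    have : (Quotient.mk (MulAction.orbitRel G H) (g • h)) =
        (Quotient.mk (MulAction.orbitRel G H) h) :=
      Quotient.sound ⟨g, rfl⟩
    simp [hr, this]
  set σ : H → G := fun h => Classical.choose (hrel h) with hσ
  have hσspec : ∀ h : H, σ h • r h = h := fun h => Classical.choose_spec (hrel h)
  -- argmax at representative
  have hamax : ∀ h : H, ∃ a : A, (Finset.univ.sup' Finset.univ_nonempty
      fun a : A => Q (h, a)) = Q (h, a) := by
    intro h
    obtain ⟨a, _, ha⟩ := Finset.exists_mem_eq_sup' Finset.univ_nonempty (fun a : A => Q (h, a))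
    exact ⟨a, ha⟩
  set α : H → A := fun h => Classical.choose (hamax h) with hα
  have hαspec : ∀ h : H, (Finset.univ.sup' Finset.univ_nonempty fun a : A => Q (h, a)) =
      Q (h, α h) := fun h => Classical.choose_spec (hamax h)
  refine ⟨fun h => σ h • α (r h), ?_, ?_⟩
  · intro g h
    have h1 : σ (g • h) • r h = g • h := by
      have := hσspec (g • h); rwa [hrinv] at this
    have h2 : (g * σ h) • r h = g • h := by rw [mul_smul, hσspec]
    have heq := huniq _ _ _ (h1.trans h2.symm)
    show σ (g • h) • α (r (g • h)) = g • (σ h • α (r h))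
    rw [hrinv, heq, mul_smul]
  · intro h
    have key : Q (h, σ h • α (r h)) = Q (r h, α (r h)) := by
      have := hInv (σ h) (r h) (α (r h)); rwa [hσspec] at this
    show Q (h, σ h • α (r h)) = _
    rw [key, ← hαspec (r h)]
    apply le_antisymm
    · apply Finset.sup'_le
      intro a _
      have e : Q (r h, a) = Q (h, σ h • a) := by
        have := hInv (σ h) (r h) a; rw [hσspec] at this; exact this.symm
      rw [e]
      exact Finset.le_sup' (fun a : A => Q (h, a)) (Finset.mem_univ (σ h • a))
    · apply Finset.sup'_le
      intro a _
      have e : Q (h, a) = Q (r h, (σ h)⁻¹ • a) := by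
        have := hInv (σ h) (r h) ((σ h)⁻¹ • a)
        rw [hσspec, smul_inv_smul] at this; exact this
      rw [e]
      exact Finset.le_sup' (fun a : A => Q (r h, a)) (Finset.mem_univ ((σ h)⁻¹ • a))
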